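/- Let ζ be a nonnegative random variable with positive finite mean. Define α(θ) = log E[exp(θζ)], α*(x) = sup_θ (θx - α(θ)), and g(x) = x·α*(1/x) = sup_{θ < θ*}(θ - x·α(θ)) where θ* = sup{θ > 0 : α(θ) < ∞}. If the essential infimum of ζ equals 0, then g(x) < ∞ for all x ≥ 1/E[ζ]. -/

import Mathlib

open MeasureTheory ProbabilityTheory

/-- `θ < θ*` where `θ* = sup {θ > 0 : E[exp(θζ)] < ∞}` (and `θ* = 0` if that set is
empty, since `α(θ) < ∞` always holds for `θ ≤ 0` when `ζ ≥ 0`). -/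
def LtThetaStar {Ω : Type*} [MeasurableSpace Ω] (μ : Measure Ω) (ζ : Ω → ℝ) (θ : ℝ) : Prop :=
  θ < 0 ∨ ∃ θ' : ℝ, θ < θ' ∧ 0 < θ' ∧ Integrable (fun ω => Real.exp (θ' * ζ ω)) μ

/-- If `ζ ≥ 0` has positive finite mean and `essinf ζ = 0`, then
`g(x) = sup_{θ < θ*} (θ - x α(θ))` is finite for every `x ≥ 1/E[ζ]`. -/
theorem g_finite_of_essinf_zero {Ω : Type*} [MeasurableSpace Ω]
    (μ : Measure Ω) [IsProbabilityMeasure μ]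
    (ζ : Ω → ℝ) (hmeas : Measurable ζ)
    (hnonneg : ∀ᵐ ω ∂μ, 0 ≤ ζ ω)
    (hint : Integrable ζ μ) (hmean : 0 < ∫ ω, ζ ω ∂μ)
    (hessinf : ∀ ε > (0 : ℝ), 0 < μ {ω | ζ ω < ε}) :
    ∀ x : ℝ, (∫ ω, ζ ω ∂μ)⁻¹ ≤ x →
      BddAbove ((fun θ => θ - x * cgf ζ μ θ) '' {θ : ℝ | LtThetaStar μ ζ θ}) := by
  intro x hx
  set m : ℝ := ∫ ω, ζ ω ∂μ with hm
  have hxpos : 0 < x := lt_of_lt_of_le (inv_pos.mpr hmean) hx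
  set ε : ℝ := x⁻¹ with hε
  have hεpos : 0 < ε := inv_pos.mpr hxpos
  have hμpos : 0 < μ {ω | ζ ω < ε} := hessinf ε hεpos
  set p : ℝ := (μ {ω | ζ ω < ε}).toReal with hp
  have hpfin : μ {ω | ζ ω < ε} ≠ ⊤ := measure_ne_top μ _
  have hppos : 0 < p := ENNReal.toReal_pos hμpos.ne' hpfin
  refine ⟨max 0 (-(x * Real.log p)), ?_⟩
  rintro y ⟨θ, hθ, rfl⟩
  rcases le_or_gt θ 0 with hθ0 | hθ0
  · -- θ ≤ 0 : use cgf θ ≥ θ ε + log p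
    have hintexp : Integrable (fun ω => Real.exp (θ * ζ ω)) μ := by
      refine Integrable.mono' (integrable_const 1)
        ((hmeas.const_mul θ).exp.aestronglyMeasurable) ?_
      filter_upwards [hnonneg] with ω hω
      rw [Real.norm_eq_abs, abs_of_pos (Real.exp_pos _)]
      exact Real.exp_le_one_iff.mpr (mul_nonpos_of_nonpos_of_nonneg hθ0 hω)
    have hmeasset : MeasurableSet {ω | ζ ω < ε} := hmeas measurableSet_Iio
    have hlow : Real.exp (θ * ε) * p ≤ mgf ζ μ θ := by
      have h1 : ∫ ω, Set.indicator {ω | ζ ω < ε} (fun _ => Real.exp (θ * ε)) ω ∂μ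
          = Real.exp (θ * ε) * p := by
        rw [integral_indicator_const _ hmeasset, smul_eq_mul, mul_comm, hε]
        rfl
      rw [← h1]
      refine integral_mono_ae (Integrable.indicator (integrable_const _) hmeasset) hintexp ?_
      filter_upwards [hnonneg] with ω hω
      by_cases hmem : ω ∈ {ω | ζ ω < ε}
      · rw [Set.indicator_of_mem hmem]
        exact Real.exp_le_exp.mpr (mul_le_mul_of_nonpos_left (le_of_lt hmem) hθ0)
      · rw [Set.indicator_of_notMem hmem]
        exact (Real.exp_pos _).le
    have hmgfpos : 0 < mgf ζ μ θ := mgf_pos hintexp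
    have hcgf : θ * ε + Real.log p ≤ cgf ζ μ θ := by
      have := Real.log_le_log (by positivity) hlow
      rwa [Real.log_mul (Real.exp_pos _).ne' hppos.ne', Real.log_exp] at this
    have hxe : x * ε = 1 := mul_inv_cancel₀ hxpos.ne'
    have : θ - x * cgf ζ μ θ ≤ -(x * Real.log p) := by
      have h2 : x * (θ * ε + Real.log p) ≤ x * cgf ζ μ θ :=
        mul_le_mul_of_nonneg_left hcgf hxpos.le
      nlinarith
    exact this.trans (le_max_right _ _)
  · -- θ > 0 : cgf θ ≥ θ m, so θ - x cgf θ ≤ θ(1 - x m) ≤ 0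
    rcases hθ with hθ | ⟨θ', hθθ', hθ'pos, hθ'int⟩
    · linarith
    have hintexp : Integrable (fun ω => Real.exp (θ * ζ ω)) μ := by
      refine Integrable.mono' hθ'int
        ((hmeas.const_mul θ).exp.aestronglyMeasurable) ?_
      filter_upwards [hnonneg] with ω hω
      rw [Real.norm_eq_abs, abs_of_pos (Real.exp_pos _)]
      exact Real.exp_le_exp.mpr (mul_le_mul_of_nonneg_right hθθ'.le hω)
    have hjensen : Real.exp (θ * m) ≤ mgf ζ μ θ := by
      have := convexOn_exp.map_integral_le (Real.continuous_exp.continuousOn)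
        isClosed_univ (Filter.Eventually.of_forall fun ω => Set.mem_univ _)
        (hint.const_mul θ) (by exact hintexp)
      simpa [mgf, integral_const_mul] using this
    have hcgf : θ * m ≤ cgf ζ μ θ := by
      have := Real.log_le_log (Real.exp_pos _) hjensen
      rwa [Real.log_exp] at this
    have hxm : 1 ≤ x * m := by
      rw [hm] at hmean ⊢
      calc (1:ℝ) = (∫ ω, ζ ω ∂μ)⁻¹ * (∫ ω, ζ ω ∂μ) := (inv_mul_cancel₀ hmean.ne').symm
        _ ≤ x * ∫ ω, ζ ω ∂μ := mul_le_mul_of_nonneg_right hx hmean.le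
    have : θ - x * cgf ζ μ θ ≤ 0 := by nlinarith [mul_le_mul_of_nonneg_left hcgf hxpos.le]
    exact this.trans (le_max_left _ _)
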